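/- arXiv:0903.3778 — 4 statements merged into one kernel-verified Lean document; each statement's English description precedes it below -/
import Mathlib

section
/- For any normed finitely generated ℤ-module (M,‖·‖), one has λ_ℚ(M,‖·‖) ≤ λ_ℤ(M,‖·‖) ≤ rk(M) · λ_ℚ(M,‖·‖). -/
open scoped TensorProduct

/-- `N` is a norm on the real vector space `V`. -/
def IsNorm {V : Type*} [AddCommGroup V] [Module ℝ V] (N : V → ℝ) : Prop :=
  (∀ v, N v = 0 ↔ v = 0) ∧ (∀ (r : ℝ) (v : V), N (r • v) = |r| * N v) ∧
    ∀ v w, N (v + w) ≤ N v + N w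

/-- `λ_ℚ(M, N)`: the infimum of all `l` such that some elements of `M` forming a
`ℚ`-basis of `M ⊗ ℚ` all have norm `≤ l`. -/
noncomputable def lambdaQ {M : Type*} [AddCommGroup M] (N : ℝ ⊗[ℤ] M → ℝ) : ℝ :=
  sInf {l | ∃ (n : ℕ) (e : Fin n → M),
    LinearIndependent ℚ (fun i => ((1 : ℚ) ⊗ₜ[ℤ] e i : ℚ ⊗[ℤ] M)) ∧
    Submodule.span ℚ (Set.range fun i => ((1 : ℚ) ⊗ₜ[ℤ] e i : ℚ ⊗[ℤ] M)) = ⊤ ∧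
    ∀ i, N ((1 : ℝ) ⊗ₜ[ℤ] e i) ≤ l}

/-- `λ_ℤ(M, N)`: the infimum of all `l` such that some elements of `M` whose images form
a free `ℤ`-basis of `M/M_tor` all have norm `≤ l`. -/
noncomputable def lambdaZ {M : Type*} [AddCommGroup M] (N : ℝ ⊗[ℤ] M → ℝ) : ℝ :=
  sInf {l | ∃ (n : ℕ) (e : Fin n → M),
    LinearIndependent ℤ
      (fun i => (Submodule.Quotient.mk (e i) : M ⧸ Submodule.torsion ℤ M)) ∧
    Submodule.span ℤ (Set.range fun i =>
      (Submodule.Quotient.mk (e i) : M ⧸ Submodule.torsion ℤ M)) = ⊤ ∧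
    ∀ i, N ((1 : ℝ) ⊗ₜ[ℤ] e i) ≤ l}

lemma fg_submodule_rat_cyclic (G : Submodule ℤ ℚ) (hG : G.FG) :
    ∃ g : ℚ, G = Submodule.span ℤ {g} := by
  obtain ⟨s, hs⟩ := hG
  set d : ℤ := ∏ q ∈ s, (q.den : ℤ) with hd
  have hdpos : 0 < d := Finset.prod_pos (fun q _ => by exact_mod_cast q.pos)
  -- every element of G times d is an integer
  have key : ∀ q ∈ G, ∃ a : ℤ, (a : ℚ) = q * d := by
    intro q hq
    rw [← hs] at hq
    induction hq using Submodule.span_induction with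
    | mem x hx =>
      have hdvd : (x.den : ℤ) ∣ d := Finset.dvd_prod_of_mem _ hx
      obtain ⟨c, hc⟩ := hdvd
      refine ⟨x.num * c, ?_⟩
      push_cast
      rw [hc]; push_cast
      rw [← mul_assoc]
      congr 1
      rw [mul_comm, Rat.den_mul_eq_num]
    | zero => exact ⟨0, by simp⟩
    | add x y _ _ hx hy =>
      obtain ⟨a, ha⟩ := hx; obtain ⟨b, hb⟩ := hy
      exact ⟨a + b, by push_cast [ha, hb]; ring⟩
    | smul c x _ hx =>
      obtain ⟨a, ha⟩ := hx
      exact ⟨c * a, by push_cast [ha]; rw [zsmul_eq_mul]; push_cast; ring⟩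
  -- the ideal of numerators
  set I : Submodule ℤ ℤ := Submodule.comap (LinearMap.toSpanSingleton ℤ ℚ ((d : ℚ)⁻¹)) G with hI
  have hprin : I.IsPrincipal := inferInstance
  obtain ⟨k, hk⟩ := hprin
  refine ⟨(k : ℚ) / d, ?_⟩
  have hd0 : (d : ℚ) ≠ 0 := by positivity
  apply le_antisymm
  · intro q hq
    obtain ⟨a, ha⟩ := key q hq
    have haI : a ∈ I := by
      simp only [hI, Submodule.mem_comap, LinearMap.toSpanSingleton_apply]
      have : a • (d : ℚ)⁻¹ = q := by
        rw [zsmul_eq_mul, ha]; field_simp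
      rwa [this]
    rw [hk] at haI
    obtain ⟨c, hc⟩ := Submodule.mem_span_singleton.1 haI
    apply Submodule.mem_span_singleton.2
    refine ⟨c, ?_⟩
    rw [zsmul_eq_mul] at hc ⊢
    have hc' : (c : ℚ) * k = a := by exact_mod_cast hc
    field_simp
    try rw [hc', ha]
    try rw [hc']
    try ring
    try linarith [ha, hc']
  · rw [Submodule.span_le, Set.singleton_subset_iff]
    have hkI : (k : ℤ) ∈ I := by rw [hk]; exact Submodule.mem_span_singleton_self k
    simp only [hI, Submodule.mem_comap, LinearMap.toSpanSingleton_apply] at hkI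
    have : (k : ℚ) / d = k • (d:ℚ)⁻¹ := by rw [zsmul_eq_mul]; ring
    rw [SetLike.mem_coe, this]
    exact hkI

section
variable {r : ℕ}

/-- extension by zero as a linear map -/
noncomputable def extMap (r : ℕ) : (Fin r → ℚ) →ₗ[ℤ] (Fin (r+1) → ℚ) :=
  LinearMap.pi (Fin.lastCases 0 (fun i => LinearMap.proj i))

lemma extMap_castSucc (x : Fin r → ℚ) (i : Fin r) : extMap r x (Fin.castSucc i) = x i := by
  simp [extMap, LinearMap.pi_apply]

lemma extMap_last (x : Fin r → ℚ) : extMap r x (Fin.last r) = 0 := by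
  simp [extMap, LinearMap.pi_apply]

lemma extMap_inj : Function.Injective (extMap r) := by
  intro x y h
  funext i
  have := congrFun h (Fin.castSucc i)
  rwa [extMap_castSucc, extMap_castSucc] at this

lemma extMap_eq_self (y : Fin (r+1) → ℚ) (hy : y (Fin.last r) = 0) :
    extMap r (fun i => y (Fin.castSucc i)) = y := by
  funext j
  induction j using Fin.lastCases with
  | last => rw [extMap_last, hy]
  | cast i => rw [extMap_castSucc]
end

lemma lattice_basis_bounded : ∀ (r : ℕ) (Λ : Submodule ℤ (Fin r → ℚ)), Λ.FG →
    (∀ i, Pi.single i (1:ℚ) ∈ Λ) →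
    ∃ f : Fin r → (Fin r → ℚ), (∀ j, f j ∈ Λ) ∧
      Submodule.span ℤ (Set.range f) = Λ ∧ ∀ j i, |f j i| ≤ 1 := by
  intro r
  induction r with
  | zero =>
    intro Λ _ _
    refine ⟨Fin.elim0, fun j => j.elim0, ?_, fun j => j.elim0⟩
    have : Λ = ⊥ := Subsingleton.elim _ _
    rw [this]
    simp [Set.range_eq_empty]
  | succ r IH =>
    intro Λ hfg hsingle
    set π : (Fin (r+1) → ℚ) →ₗ[ℤ] ℚ := LinearMap.proj (Fin.last r) with hπ
    set G : Submodule ℤ ℚ := Λ.map π with hGdef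
    obtain ⟨g, hGg⟩ := fg_submodule_rat_cyclic G (hfg.map π)
    have h1G : (1 : ℚ) ∈ G := by
      refine ⟨Pi.single (Fin.last r) 1, hsingle _, ?_⟩
      simp [hπ]
    have hg1 : |g| ≤ 1 ∧ g ≠ 0 := by
      rw [hGg] at h1G
      obtain ⟨c, hc⟩ := Submodule.mem_span_singleton.1 h1G
      rw [zsmul_eq_mul] at hc
      have hc0 : c ≠ 0 := by rintro rfl; simp at hc
      have hg0 : g ≠ 0 := by rintro rfl; simp at hc
      constructor
      · have h1 : |(c:ℚ)| * |g| = 1 := by rw [← abs_mul, hc]; simp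
        have h2 : (1:ℚ) ≤ |(c:ℚ)| := by
          have : (1:ℤ) ≤ |c| := Int.one_le_abs hc0
          exact_mod_cast this
        nlinarith [abs_nonneg g, abs_nonneg (c:ℚ)]
      · exact hg0
    -- pick w₀ in Λ with last coordinate g
    have hgG : g ∈ G := by rw [hGg]; exact Submodule.mem_span_singleton_self g
    obtain ⟨w₀, hw₀Λ, hw₀g⟩ := hgG
    -- reduce the first r coordinates
    set w : Fin (r+1) → ℚ :=
      w₀ - ∑ i : Fin r, ⌊w₀ (Fin.castSucc i)⌋ • Pi.single (Fin.castSucc i) (1:ℚ) with hwdef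
    have hwΛ : w ∈ Λ := by
      apply Submodule.sub_mem _ hw₀Λ
      exact Submodule.sum_mem _ (fun i _ => Submodule.smul_mem _ _ (hsingle _))
    have hwcast : ∀ i : Fin r, w (Fin.castSucc i) = Int.fract (w₀ (Fin.castSucc i)) := by
      intro i
      have : ((∑ i' : Fin r, ⌊w₀ (Fin.castSucc i')⌋ • Pi.single (Fin.castSucc i') (1:ℚ) : Fin (r+1) → ℚ))
          (Fin.castSucc i) = (⌊w₀ (Fin.castSucc i)⌋ : ℚ) := by
        rw [Finset.sum_apply]
        rw [Finset.sum_eq_single i]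
        · simp
        · intro b _ hb
          have : Fin.castSucc b ≠ Fin.castSucc i := by
            simpa [Fin.castSucc_inj] using hb
          simp [Pi.single_apply, this]
        · simp
      simp only [hwdef, Pi.sub_apply, this, Int.fract]
    have hwlast : w (Fin.last r) = g := by
      have : ((∑ i' : Fin r, ⌊w₀ (Fin.castSucc i')⌋ • Pi.single (Fin.castSucc i') (1:ℚ) : Fin (r+1) → ℚ))
          (Fin.last r) = 0 := by
        rw [Finset.sum_apply]
        apply Finset.sum_eq_zero
        intro b _
        have : Fin.castSucc b ≠ Fin.last r := Fin.castSucc_lt_last b |>.ne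
        simp [Pi.single_apply, this.symm, Ne.symm this]
      simp only [hwdef, Pi.sub_apply, this, sub_zero]
      exact hw₀g
    have hπw : π w = g := hwlast
    -- the smaller lattice
    set Λ' : Submodule ℤ (Fin r → ℚ) := Λ.comap (extMap r) with hΛ'def
    have hmapΛ' : Λ'.map (extMap r) = Λ ⊓ LinearMap.ker π := by
      apply le_antisymm
      · rintro y ⟨x, hx, rfl⟩
        exact ⟨hx, by simp [LinearMap.mem_ker, hπ, extMap_last]⟩
      · rintro y ⟨hyΛ, hyk⟩
        have hy0 : y (Fin.last r) = 0 := hyk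
        refine ⟨fun i => y (Fin.castSucc i), ?_, extMap_eq_self y hy0⟩
        simpa [hΛ'def, Submodule.mem_comap, extMap_eq_self y hy0] using hyΛ
    have hΛ'fg : Λ'.FG := by
      apply Submodule.fg_of_fg_map_injective (extMap r) extMap_inj
      rw [hmapΛ']
      -- Λ ⊓ ker π is FG since Λ is Noetherian
      have : Module.Finite ℤ Λ := (Module.Finite.iff_fg).2 hfg
      have : IsNoetherian ℤ Λ := inferInstance
      have h1 : (Submodule.comap Λ.subtype (LinearMap.ker π)).FG := IsNoetherian.noetherian _
      have h2 := h1.map Λ.subtype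
      rwa [Submodule.map_comap_subtype] at h2
    have hΛ'single : ∀ i, Pi.single i (1:ℚ) ∈ Λ' := by
      intro i
      have : extMap r (Pi.single i (1:ℚ)) = Pi.single (Fin.castSucc i) 1 := by
        funext j
        induction j using Fin.lastCases with
        | last =>
          rw [extMap_last]
          have : Fin.castSucc i ≠ Fin.last r := (Fin.castSucc_lt_last i).ne
          simp [Pi.single_apply, Ne.symm this]
        | cast i' =>
          rw [extMap_castSucc]
          simp [Pi.single_apply, Fin.castSucc_inj]
      simp only [hΛ'def, Submodule.mem_comap, this]
      exact hsingle _
    obtain ⟨f', hf'mem, hf'span, hf'bd⟩ := IH Λ' hΛ'fg hΛ'single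
    refine ⟨Fin.snoc (fun j => extMap r (f' j)) w, ?_, ?_, ?_⟩
    · intro j
      induction j using Fin.lastCases with
      | last => rw [Fin.snoc_last]; exact hwΛ
      | cast j => rw [Fin.snoc_castSucc]; exact hf'mem j
    · apply le_antisymm
      · rw [Submodule.span_le]
        rintro x ⟨j, rfl⟩
        induction j using Fin.lastCases with
        | last => rw [Fin.snoc_last]; exact hwΛ
        | cast j => rw [Fin.snoc_castSucc]; exact hf'mem j
      · intro x hx
        have hπx : π x ∈ G := ⟨x, hx, rfl⟩
        rw [hGg] at hπx
        obtain ⟨c, hc⟩ := Submodule.mem_span_singleton.1 hπx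
        set y : Fin (r+1) → ℚ := x - c • w with hydef
        have hyΛ : y ∈ Λ := Submodule.sub_mem _ hx (Submodule.smul_mem _ _ hwΛ)
        have hylast : y (Fin.last r) = 0 := by
          have h1 : π y = π x - c • π w := by rw [hydef, map_sub, map_smul]
          have h2 : π y = 0 := by rw [h1, hπw, ← hc, sub_self]
          exact h2
        have hy' : (fun i => y (Fin.castSucc i)) ∈ Λ' := by
          simp only [hΛ'def, Submodule.mem_comap, extMap_eq_self y hylast]
          exact hyΛ
        rw [← hf'span] at hy'
        have hymem : y ∈ Submodule.span ℤ
            (Set.range (Fin.snoc (fun j => extMap r (f' j)) w : Fin (r+1) → _)) := by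
          have := Submodule.mem_map_of_mem (f := extMap r) hy'
          rw [Submodule.map_span, ← Set.range_comp] at this
          rw [← extMap_eq_self y hylast]
          refine Submodule.span_mono ?_ this
          rintro z ⟨j, rfl⟩
          exact ⟨Fin.castSucc j, by simp⟩
        have hwmem : w ∈ Submodule.span ℤ
            (Set.range (Fin.snoc (fun j => extMap r (f' j)) w : Fin (r+1) → _)) :=
          Submodule.subset_span ⟨Fin.last r, Fin.snoc_last _ _⟩
        have hxy : y + c • w = x := by rw [hydef]; abel
        rw [← hxy]
        exact Submodule.add_mem _ hymem (Submodule.smul_mem _ _ hwmem)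
    · intro j i
      induction j using Fin.lastCases with
      | last =>
        rw [Fin.snoc_last]
        induction i using Fin.lastCases with
        | last => rw [hwlast]; exact hg1.1
        | cast i =>
          rw [hwcast]
          rw [abs_of_nonneg (Int.fract_nonneg _)]
          exact (Int.fract_lt_one _).le
      | cast j =>
        rw [Fin.snoc_castSucc]
        induction i using Fin.lastCases with
        | last => rw [extMap_last]; simp
        | cast i => rw [extMap_castSucc]; exact hf'bd j i


lemma tmul_eq_zero_of_smul_eq_zero {A : Type*} [Field A] [CharZero A] {M : Type*} [AddCommGroup M]
    (a : A) (m : M) (k : ℤ) (hk : k ≠ 0) (h : k • m = 0) : (a ⊗ₜ[ℤ] m : A ⊗[ℤ] M) = 0 := by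
  have hk' : (k : A) ≠ 0 := Int.cast_ne_zero.2 hk
  have h1 : (k : A) • (a ⊗ₜ[ℤ] m : A ⊗[ℤ] M) = 0 := by
    rw [Int.cast_smul_eq_zsmul, ← TensorProduct.tmul_smul, h, TensorProduct.tmul_zero]
  exact (smul_eq_zero.1 h1).resolve_left hk'

lemma one_tmul_rat_eq_zero_iff {M : Type*} [AddCommGroup M] (m : M) :
    ((1:ℚ) ⊗ₜ[ℤ] m : ℚ ⊗[ℤ] M) = 0 ↔ ∃ k : ℤ, k ≠ 0 ∧ k • m = 0 := by
  have inst : IsLocalizedModule (nonZeroDivisors ℤ) (TensorProduct.mk ℤ ℚ M 1) :=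
    (isLocalizedModule_iff_isBaseChange (nonZeroDivisors ℤ) ℚ _).2 (TensorProduct.isBaseChange ℤ M ℚ)
  constructor
  · intro h
    obtain ⟨s, hs⟩ := (IsLocalizedModule.eq_zero_iff (nonZeroDivisors ℤ) (TensorProduct.mk ℤ ℚ M 1)).1 h
    exact ⟨s, nonZeroDivisors.coe_ne_zero s, hs⟩
  · rintro ⟨k, hk, h⟩
    exact tmul_eq_zero_of_smul_eq_zero 1 m k hk h

section Phi
variable {M : Type*} [AddCommGroup M]

/-- base change of the projection to `M ⧸ torsion`. -/
noncomputable def phi (M : Type*) [AddCommGroup M] :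
    ℚ ⊗[ℤ] M →ₗ[ℚ] ℚ ⊗[ℤ] (M ⧸ Submodule.torsion ℤ M) :=
  LinearMap.baseChange ℚ (Submodule.torsion ℤ M).mkQ

lemma phi_bijective : Function.Bijective (phi M) := by
  constructor
  · have flat : Module.Flat ℤ ℚ := IsLocalization.flat ℚ (nonZeroDivisors ℤ)
    have hex := Module.Flat.lTensor_exact ℚ (LinearMap.exact_subtype_mkQ (Submodule.torsion ℤ M))
    intro x y hxy
    have hsub : ∀ z : ℚ ⊗[ℤ] (Submodule.torsion ℤ M),
        LinearMap.lTensor ℚ (Submodule.torsion ℤ M).subtype z = 0 := by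
      intro z
      induction z with
      | zero => simp
      | tmul a t =>
        rw [LinearMap.lTensor_tmul]
        obtain ⟨k, hkt⟩ := (Submodule.mem_torsion_iff (t : M)).1 t.2
        rw [Submonoid.smul_def] at hkt
        exact tmul_eq_zero_of_smul_eq_zero a _ (k : ℤ) (nonZeroDivisors.coe_ne_zero k) hkt
      | add u v hu hv => rw [map_add, hu, hv, add_zero]
    have h0 : LinearMap.lTensor ℚ (Submodule.torsion ℤ M).mkQ (x - y) = 0 := by
      have : ∀ u, phi M u = LinearMap.lTensor ℚ (Submodule.torsion ℤ M).mkQ u := by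
        intro u
        induction u with
        | zero => simp
        | tmul a m => simp [phi]
        | add u v hu hv => rw [map_add, map_add, hu, hv]
      rw [map_sub, ← this, ← this, hxy, sub_self]
    obtain ⟨z, hz⟩ := (hex (x - y)).1 h0
    have h1 : x - y = 0 := by rw [← hz]; exact hsub z
    exact sub_eq_zero.1 h1
  · intro x
    induction x with
    | zero => exact ⟨0, map_zero _⟩
    | tmul a y =>
      obtain ⟨m, rfl⟩ := Submodule.Quotient.mk_surjective _ y
      exact ⟨a ⊗ₜ[ℤ] m, by simp [phi]⟩
    | add u v hu hv =>
      obtain ⟨x, rfl⟩ := hu; obtain ⟨y, rfl⟩ := hv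
      exact ⟨x + y, map_add _ _ _⟩

end Phi

lemma IsNorm.nonneg' {V : Type*} [AddCommGroup V] [Module ℝ V] {N : V → ℝ}
    (hN : IsNorm N) (v : V) : 0 ≤ N v := by
  have h0 : N 0 = 0 := (hN.1 0).2 rfl
  have hneg : N (-v) = N v := by
    have := hN.2.1 (-1) v; simpa using this
  have htri := hN.2.2 v (-v)
  rw [add_neg_cancel, h0, hneg] at htri
  linarith

lemma IsNorm.sum_le' {V : Type*} [AddCommGroup V] [Module ℝ V] {N : V → ℝ}
    (hN : IsNorm N) {ι : Type*} (s : Finset ι) (v : ι → V) :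
    N (∑ i ∈ s, v i) ≤ ∑ i ∈ s, N (v i) := by
  classical
  induction s using Finset.induction with
  | empty => simp [(hN.1 0).2 rfl]
  | insert _ _ hx ih =>
    rw [Finset.sum_insert hx, Finset.sum_insert hx]
    exact le_trans (hN.2.2 _ _) (by linarith)

/-- the canonical map `ℚ ⊗ M → ℝ ⊗ M`. -/
noncomputable def psi (M : Type*) [AddCommGroup M] : ℚ ⊗[ℤ] M →ₗ[ℤ] ℝ ⊗[ℤ] M :=
  TensorProduct.map ((algebraMap ℚ ℝ).toAddMonoidHom.toIntLinearMap) LinearMap.id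

lemma psi_tmul {M : Type*} [AddCommGroup M] (a : ℚ) (m : M) :
    psi M (a ⊗ₜ[ℤ] m) = (a : ℝ) ⊗ₜ[ℤ] m := by
  exact TensorProduct.map_tmul _ _ a m

lemma psi_qsmul {M : Type*} [AddCommGroup M] (q : ℚ) (x : ℚ ⊗[ℤ] M) :
    psi M (q • x) = (q : ℝ) • psi M x := by
  induction x with
  | zero => simp
  | tmul a m =>
    rw [TensorProduct.smul_tmul', psi_tmul, psi_tmul, TensorProduct.smul_tmul']
    norm_num
  | add u v hu hv => rw [smul_add, map_add, hu, hv, map_add, smul_add]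

/-- `λ_ℚ(M) ≤ λ_ℤ(M) ≤ rk(M) · λ_ℚ(M)`. -/
theorem lambdaQ_le_lambdaZ_le_rank_mul_lambdaQ
    {M : Type*} [AddCommGroup M] [Module.Finite ℤ M]
    (N : ℝ ⊗[ℤ] M → ℝ) (hN : IsNorm N) :
    lambdaQ N ≤ lambdaZ N ∧
      lambdaZ N ≤ (Module.finrank ℚ (ℚ ⊗[ℤ] M) : ℝ) * lambdaQ N := by
  classical
  set L := M ⧸ Submodule.torsion ℤ M with hLdef
  set QS : Set ℝ := {l | ∃ (n : ℕ) (e : Fin n → M),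
    LinearIndependent ℚ (fun i => ((1 : ℚ) ⊗ₜ[ℤ] e i : ℚ ⊗[ℤ] M)) ∧
    Submodule.span ℚ (Set.range fun i => ((1 : ℚ) ⊗ₜ[ℤ] e i : ℚ ⊗[ℤ] M)) = ⊤ ∧
    ∀ i, N ((1 : ℝ) ⊗ₜ[ℤ] e i) ≤ l} with hQSdef
  set ZS : Set ℝ := {l | ∃ (n : ℕ) (e : Fin n → M),
    LinearIndependent ℤ
      (fun i => (Submodule.Quotient.mk (e i) : M ⧸ Submodule.torsion ℤ M)) ∧
    Submodule.span ℤ (Set.range fun i =>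
      (Submodule.Quotient.mk (e i) : M ⧸ Submodule.torsion ℤ M)) = ⊤ ∧
    ∀ i, N ((1 : ℝ) ⊗ₜ[ℤ] e i) ≤ l} with hZSdef
  have hQ : lambdaQ N = sInf QS := rfl
  have hZ : lambdaZ N = sInf ZS := rfl
  let phiE : (ℚ ⊗[ℤ] M) ≃ₗ[ℚ] ℚ ⊗[ℤ] L := LinearEquiv.ofBijective (phi M) phi_bijective
  by_cases htriv : Subsingleton (ℚ ⊗[ℤ] M)
  · -- trivial case
    have hQL : Subsingleton (ℚ ⊗[ℤ] L) := phiE.symm.toEquiv.subsingleton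
    have hLsub : Subsingleton L := by
      let B := Module.Free.chooseBasis ℤ L
      have hempty : IsEmpty (Module.Free.ChooseBasisIndex ℤ L) := by
        by_contra h
        rw [not_isEmpty_iff] at h
        obtain ⟨i⟩ := h
        exact (B.baseChange ℚ).ne_zero i (Subsingleton.elim _ _)
      constructor
      intro x y
      apply B.repr.injective
      ext a
      exact (hempty.false a).elim
    have hQuniv : QS = Set.univ := by
      apply Set.eq_univ_iff_forall.2
      intro l
      refine ⟨0, Fin.elim0, linearIndependent_empty_type, Subsingleton.elim _ _,
        fun i => i.elim0⟩
    have hZuniv : ZS = Set.univ := by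
      apply Set.eq_univ_iff_forall.2
      intro l
      refine ⟨0, Fin.elim0, linearIndependent_empty_type, ?_, fun i => i.elim0⟩
      rw [Submodule.eq_top_iff']
      intro x
      rw [Subsingleton.elim x 0]
      exact Submodule.zero_mem _
    have hnb : ¬ BddBelow (Set.univ : Set ℝ) := by
      rintro ⟨b, hb⟩
      have := hb (Set.mem_univ (b - 1))
      linarith
    rw [hQ, hZ, hQuniv, hZuniv, Real.sInf_of_not_bddBelow hnb]
    norm_num
  · -- nontrivial case
    have hnt : Nontrivial (ℚ ⊗[ℤ] M) := not_subsingleton_iff_nontrivial.1 htriv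
    have hQlb : ∀ l ∈ QS, 0 ≤ l := by
      rintro l ⟨n, e, hli, hsp, hle⟩
      rcases Nat.eq_zero_or_pos n with rfl | hn
      · exfalso
        rw [Set.range_eq_empty, Submodule.span_empty] at hsp
        exact bot_ne_top hsp
      · have h1 := hle ⟨0, hn⟩
        have h2 := hN.nonneg' ((1 : ℝ) ⊗ₜ[ℤ] e ⟨0, hn⟩)
        linarith
    -- ZS is nonempty
    have hZne : ZS.Nonempty := by
      let b0 : Module.Basis (Fin (Fintype.card (Module.Free.ChooseBasisIndex ℤ L))) ℤ L :=
        (Module.Free.chooseBasis ℤ L).reindex (Fintype.equivFin _)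
      choose sec hsec using Submodule.Quotient.mk_surjective (Submodule.torsion ℤ M)
      set e0 : Fin (Fintype.card (Module.Free.ChooseBasisIndex ℤ L)) → M :=
        fun i => sec (b0 i) with he0
      obtain ⟨l0, hl0⟩ := (Set.finite_range (fun i => N ((1:ℝ) ⊗ₜ[ℤ] e0 i))).bddAbove
      have hfun : (fun i => (Submodule.Quotient.mk (e0 i) : L)) = ⇑b0 :=
        funext fun i => hsec _
      refine ⟨l0, Fintype.card _, e0, ?_, ?_, ?_⟩
      · rw [hfun]; exact b0.linearIndependent
      · rw [hfun]; exact b0.span_eq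
      · intro i
        exact hl0 ⟨i, rfl⟩
    -- ZS ⊆ QS
    have hsub : ZS ⊆ QS := by
      rintro l ⟨n, e, hli, hsp, hle⟩
      let b : Module.Basis (Fin n) ℤ L := Module.Basis.mk hli (le_of_eq hsp.symm)
      let B : Module.Basis (Fin n) ℚ (ℚ ⊗[ℤ] M) := (b.baseChange ℚ).map phiE.symm
      have hB : ∀ i, B i = (1:ℚ) ⊗ₜ[ℤ] e i := by
        intro i
        show phiE.symm ((b.baseChange ℚ) i) = _
        rw [Module.Basis.baseChange_apply, Module.Basis.mk_apply, LinearEquiv.symm_apply_eq]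
        show LinearMap.baseChange ℚ (Submodule.torsion ℤ M).mkQ ((1:ℚ) ⊗ₜ[ℤ] e i) = _
        rw [LinearMap.baseChange_tmul]
        rfl
      have hfun : (fun i => ((1:ℚ) ⊗ₜ[ℤ] e i : ℚ ⊗[ℤ] M)) = ⇑B :=
        funext fun i => (hB i).symm
      exact ⟨n, e, by rw [hfun]; exact B.linearIndependent, by rw [hfun]; exact B.span_eq, hle⟩
    have part1 : lambdaQ N ≤ lambdaZ N :=
      csInf_le_csInf ⟨0, hQlb⟩ hZne hsub
    -- part 2
    set r := Module.finrank ℚ (ℚ ⊗[ℤ] M) with hrdef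
    have hrpos : 0 < r := Module.finrank_pos
    have hstep : ∀ l ∈ QS, (r : ℝ) * l ∈ ZS := by
      rintro l ⟨n, e, hli, hsp, hle⟩
      have hl0 : 0 ≤ l := hQlb l ⟨n, e, hli, hsp, hle⟩
      let B : Module.Basis (Fin n) ℚ (ℚ ⊗[ℤ] M) := Module.Basis.mk hli hsp.ge
      have hrn : r = n := by rw [hrdef, Module.finrank_eq_card_basis B, Fintype.card_fin]
      let ρ : M →ₗ[ℤ] (Fin n → ℚ) :=
        (B.equivFun.toLinearMap.restrictScalars ℤ).comp ((TensorProduct.mk ℤ ℚ M) 1)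
      have hρ : ∀ m', ρ m' = B.equivFun ((1:ℚ) ⊗ₜ[ℤ] m') := fun m' => rfl
      have hρe : ∀ i, ρ (e i) = Pi.single i 1 := by
        intro i
        rw [hρ]
        have h1 : (1:ℚ) ⊗ₜ[ℤ] e i = B i := (Module.Basis.mk_apply hli hsp.ge i).symm
        rw [h1]
        funext j
        rw [Module.Basis.equivFun_self]
        simp [Pi.single_apply, eq_comm]
      set Λ : Submodule ℤ (Fin n → ℚ) := LinearMap.range ρ with hΛdef
      have hΛfg : Λ.FG := by
        rw [hΛdef, ← Submodule.map_top]
        exact Submodule.FG.map ρ Module.Finite.fg_top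
      have hΛsingle : ∀ i, Pi.single i (1:ℚ) ∈ Λ := fun i => ⟨e i, hρe i⟩
      obtain ⟨f, hfmem, hfspan, hfbd⟩ := lattice_basis_bounded n Λ hΛfg hΛsingle
      choose g hg using hfmem
      -- kernel of ρ is the torsion
      have hker : ∀ m', ρ m' = 0 ↔ m' ∈ Submodule.torsion ℤ M := by
        intro m'
        rw [hρ]
        constructor
        · intro h
          have h1 : ((1:ℚ) ⊗ₜ[ℤ] m' : ℚ ⊗[ℤ] M) = 0 := by
            apply B.equivFun.injective
            rw [h, map_zero]
          obtain ⟨k, hk0, hk⟩ := (one_tmul_rat_eq_zero_iff m').1 h1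
          exact (Submodule.mem_torsion_iff m').2
            ⟨⟨k, mem_nonZeroDivisors_of_ne_zero hk0⟩, hk⟩
        · intro h
          obtain ⟨k, hk⟩ := (Submodule.mem_torsion_iff m').1 h
          rw [Submonoid.smul_def] at hk
          rw [tmul_eq_zero_of_smul_eq_zero 1 m' (k : ℤ) (nonZeroDivisors.coe_ne_zero k) hk,
            map_zero]
      have htorsle : Submodule.torsion ℤ M ≤ LinearMap.ker ρ := by
        intro x hx
        rw [LinearMap.mem_ker]
        exact (hker x).2 hx
      set ρbar : L →ₗ[ℤ] (Fin n → ℚ) := Submodule.liftQ _ ρ htorsle with hρbardef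
      have hρbar : ∀ m', ρbar (Submodule.Quotient.mk m') = ρ m' :=
        fun m' => Submodule.liftQ_apply _ ρ m'
      -- f is ℚ-linearly independent, hence ℤ-linearly independent
      have hfspanQ : ⊤ ≤ Submodule.span ℚ (Set.range f) := by
        have h1 : ∀ i, Pi.single i (1:ℚ) ∈ Submodule.span ℚ (Set.range f) := by
          intro i
          have h2 : Pi.single i (1:ℚ) ∈ Submodule.span ℤ (Set.range f) :=
            hfspan ▸ hΛsingle i
          exact Submodule.span_subset_span ℤ ℚ _ h2
        intro x _
        have h3 : x ∈ Submodule.span ℚ (Set.range (Pi.basisFun ℚ (Fin n))) := by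
          rw [Module.Basis.span_eq]; trivial
        refine Submodule.span_le.2 ?_ h3
        rintro z ⟨i, rfl⟩
        rw [Pi.basisFun_apply]
        exact h1 i
      have hfindepQ : LinearIndependent ℚ f :=
        linearIndependent_of_top_le_span_of_card_eq_finrank hfspanQ
          (by simp [Module.finrank_pi])
      have hfindep : LinearIndependent ℤ f := by
        apply hfindepQ.restrict_scalars
        intro a b hab
        have : ((a : ℚ)) = ((b : ℚ)) := by simpa using hab
        exact_mod_cast this
      have hcomp : ⇑ρbar ∘ (fun j => (Submodule.Quotient.mk (g j) : L)) = f :=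
        funext fun j => by rw [Function.comp_apply, hρbar, hg]
      refine ⟨n, g, ?_, ?_, ?_⟩
      · exact LinearIndependent.of_comp ρbar (by rw [hcomp]; exact hfindep)
      · rw [Submodule.eq_top_iff']
        intro x
        obtain ⟨m', rfl⟩ := Submodule.Quotient.mk_surjective _ x
        have h1 : ρ m' ∈ Λ := ⟨m', rfl⟩
        rw [← hfspan] at h1
        obtain ⟨c, hc⟩ := (Submodule.mem_span_range_iff_exists_fun ℤ).1 h1
        have h2 : ρ (m' - ∑ j, c j • g j) = 0 := by
          rw [map_sub, map_sum]
          have : ∀ j, ρ (c j • g j) = c j • f j := fun j => by rw [map_smul, hg]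
          simp only [this]
          rw [hc, sub_self]
        have h3 : (m' - ∑ j, c j • g j) ∈ Submodule.torsion ℤ M := (hker _).1 h2
        have h4 : (Submodule.Quotient.mk (m' - ∑ j, c j • g j) : L) = 0 :=
          (Submodule.Quotient.mk_eq_zero _).2 h3
        rw [Submodule.Quotient.mk_sub] at h4
        have h5 : (Submodule.Quotient.mk m' : L) =
            Submodule.Quotient.mk (∑ j, c j • g j) := by
          rwa [sub_eq_zero] at h4
        apply (Submodule.mem_span_range_iff_exists_fun ℤ).2
        refine ⟨c, ?_⟩
        rw [h5]
        exact ((map_sum ((Submodule.torsion ℤ M).mkQ) (fun j => c j • g j) Finset.univ).trans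
          (Finset.sum_congr rfl fun j _ => map_smul _ _ _)).symm
      · intro j
        -- expansion of g j in terms of the e i
        have hsum : ((1:ℚ) ⊗ₜ[ℤ] g j : ℚ ⊗[ℤ] M) = ∑ i, f j i • ((1:ℚ) ⊗ₜ[ℤ] e i) := by
          have h1 := B.sum_equivFun ((1:ℚ) ⊗ₜ[ℤ] g j)
          have h2 : B.equivFun ((1:ℚ) ⊗ₜ[ℤ] g j) = f j := by rw [← hρ, hg]
          rw [h2] at h1
          rw [← h1]
          exact Finset.sum_congr rfl fun i _ => by rw [Module.Basis.mk_apply]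
        have hR : ((1:ℝ) ⊗ₜ[ℤ] g j : ℝ ⊗[ℤ] M) =
            ∑ i, ((f j i : ℝ)) • ((1:ℝ) ⊗ₜ[ℤ] e i) := by
          have h1 := congrArg (psi M) hsum
          rw [psi_tmul, map_sum] at h1
          push_cast at h1 ⊢
          rw [h1]
          exact Finset.sum_congr rfl fun i _ => by rw [psi_qsmul, psi_tmul]; norm_num
        rw [hR]
        calc N (∑ i, ((f j i : ℝ)) • ((1:ℝ) ⊗ₜ[ℤ] e i))
            ≤ ∑ i, N (((f j i : ℝ)) • ((1:ℝ) ⊗ₜ[ℤ] e i)) := hN.sum_le' _ _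
          _ ≤ ∑ _i : Fin n, l := by
              apply Finset.sum_le_sum
              intro i _
              rw [hN.2.1]
              have hb : |(f j i : ℝ)| ≤ 1 := by
                have := hfbd j i
                rw [show |(f j i : ℝ)| = ((|f j i| : ℚ) : ℝ) from by push_cast; ring]
                exact_mod_cast this
              have := hle i
              have hnn := hN.nonneg' ((1:ℝ) ⊗ₜ[ℤ] e i)
              nlinarith
          _ = (n : ℝ) * l := by rw [Finset.sum_const, Finset.card_univ, Fintype.card_fin,
              nsmul_eq_mul]
          _ = (r : ℝ) * l := by rw [hrn]
    refine ⟨part1, ?_⟩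
    have hQne : QS.Nonempty := hZne.mono hsub
    have hZbdd : BddBelow ZS := ⟨0, fun l hl => hQlb l (hsub hl)⟩
    have hmain : ∀ l ∈ QS, lambdaZ N ≤ (r : ℝ) * l := by
      intro l hl
      rw [hZ]
      exact csInf_le hZbdd (hstep l hl)
    have hrpos' : (0 : ℝ) < r := by exact_mod_cast hrpos
    have hdiv : lambdaZ N / r ≤ sInf QS := by
      apply le_csInf hQne
      intro l hl
      rw [div_le_iff₀ hrpos']
      calc lambdaZ N ≤ (r:ℝ) * l := hmain l hl
        _ = l * r := mul_comm _ _
    rw [hQ]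
    calc lambdaZ N = (lambdaZ N / r) * r := by field_simp
      _ ≤ sInf QS * r := by nlinarith
      _ = (r : ℝ) * sInf QS := mul_comm _ _
end

section
/- Let R = ⊕_{n≥0} Rₙ be a noetherian graded ring and h a positive integer. Then the Veronese subring R^{(h)} = ⊕_{n≥0} R_{nh} is noetherian and R is a finitely generated R^{(h)}-module. -/
/-- Let `A = ⊕ₙ 𝒜 n` be a noetherian (commutative) graded ring and `h`
a positive integer.  Then the Veronese subring `A^{(h)} = ⊕ₙ 𝒜 (h·n)` (the subalgebra
generated by — equivalently, the sum of — the graded pieces of degree divisible by `h`)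
is noetherian, and `A` is a finitely generated module over it. -/
theorem veronese_noetherian_and_finite
    {A : Type*} [CommRing A] (𝒜 : ℕ → Submodule ℤ A) [GradedRing 𝒜]
    [IsNoetherianRing A] (h : ℕ) (hh : 0 < h) :
    IsNoetherianRing ↥(Algebra.adjoin ℤ (⋃ n : ℕ, (𝒜 (h * n) : Set A))) ∧
      Module.Finite ↥(Algebra.adjoin ℤ (⋃ n : ℕ, (𝒜 (h * n) : Set A))) A := by
  classical
  set B : Subalgebra ℤ A := Algebra.adjoin ℤ (⋃ n : ℕ, (𝒜 (h * n) : Set A)) with hBdef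
  set A₀ : Subalgebra ℤ A := SetLike.GradeZero.subalgebra 𝒜 with hA₀def
  have hA₀B : A₀ ≤ B := by
    intro x hx
    apply Algebra.subset_adjoin
    exact Set.mem_iUnion.mpr ⟨0, by rw [mul_zero]; exact hx⟩
  -- the irrelevant ideal and a finite set of homogeneous generators
  set I : Ideal A := (HomogeneousIdeal.irrelevant 𝒜).toIdeal with hIdef
  obtain ⟨T, hT⟩ := (isNoetherianRing_iff_ideal_fg A).mp ‹_› I
  set S : Finset A := T.biUnion (fun t => (DirectSum.decompose 𝒜 t).support.image
      (fun i => (DirectSum.decompose 𝒜 t i : A))) with hSdef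
  have hS_homog : ∀ s ∈ S, SetLike.IsHomogeneousElem 𝒜 s := by
    intro s hs
    simp only [hSdef, Finset.mem_biUnion, Finset.mem_image] at hs
    obtain ⟨t, -, i, -, rfl⟩ := hs
    exact ⟨i, SetLike.coe_mem _⟩
  have hTmem : ∀ t ∈ T, t ∈ I := fun t ht => hT ▸ Ideal.subset_span ht
  have hS_I : ∀ s ∈ S, s ∈ I := by
    intro s hs
    simp only [hSdef, Finset.mem_biUnion, Finset.mem_image] at hs
    obtain ⟨t, ht, i, -, rfl⟩ := hs
    exact (HomogeneousIdeal.irrelevant 𝒜).isHomogeneous i (hTmem t ht)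
  have hspanS : I ≤ Ideal.span (S : Set A) := by
    rw [← hT, Ideal.span_le]
    intro t ht
    rw [SetLike.mem_coe, ← DirectSum.sum_support_decompose 𝒜 t]
    refine sum_mem fun i hi => Ideal.subset_span ?_
    simp only [hSdef, Finset.coe_biUnion, Set.mem_iUnion, Finset.mem_coe, Finset.mem_image]
    exact ⟨t, ht, i, hi, rfl⟩
  -- main induction: every homogeneous element lies in the `A₀`-subalgebra generated by `S`
  have key : ∀ n : ℕ, ∀ x ∈ 𝒜 n, x ∈ Algebra.adjoin ↥A₀ (S : Set A) := by
    intro n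
    induction n using Nat.strong_induction_on with
    | _ n ih =>
      intro x hx
      rcases Nat.eq_zero_or_pos n with rfl | hn
      · exact Subalgebra.algebraMap_mem (Algebra.adjoin ↥A₀ (S : Set A)) (⟨x, hx⟩ : ↥A₀)
      · have hxI : x ∈ I := by
          refine (HomogeneousIdeal.mem_irrelevant_iff 𝒜 x).mpr ?_
          rw [GradedRing.proj_apply, DirectSum.decompose_of_mem_ne 𝒜 hx hn.ne']
        obtain ⟨c, -, hc⟩ := Submodule.mem_span_finset.mp (hspanS hxI)
        have hx' : x = ∑ s ∈ S, GradedRing.proj 𝒜 n (c s * s) := by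
          have h1 : GradedRing.proj 𝒜 n x = x := by
            rw [GradedRing.proj_apply, DirectSum.decompose_of_mem_same 𝒜 hx]
          calc x = GradedRing.proj 𝒜 n x := h1.symm
            _ = GradedRing.proj 𝒜 n (∑ s ∈ S, c s * s) := by
                rw [show (∑ s ∈ S, c s * s) = x from hc]
            _ = ∑ s ∈ S, GradedRing.proj 𝒜 n (c s * s) := map_sum _ _ _
        rw [hx']
        refine Subalgebra.sum_mem _ fun s hs => ?_
        obtain ⟨d, hd⟩ := hS_homog s hs
        by_cases hdn : d ≤ n
        · rcases Nat.eq_zero_or_pos d with rfl | hdpos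
          · have hs0 : s = 0 := by
              have h2 : (DirectSum.decompose 𝒜 s 0 : A) = s :=
                DirectSum.decompose_of_mem_same 𝒜 hd
              have h3 : GradedRing.proj 𝒜 0 s = 0 :=
                (HomogeneousIdeal.mem_irrelevant_iff 𝒜 s).mp (hS_I s hs)
              rw [GradedRing.proj_apply, h2] at h3
              exact h3
            rw [hs0, mul_zero, map_zero]
            exact Subalgebra.zero_mem _
          · have heq : GradedRing.proj 𝒜 n (c s * s)
                = (DirectSum.decompose 𝒜 (c s) (n - d) : A) * s := by
              rw [GradedRing.proj_apply]
              exact DirectSum.coe_decompose_mul_of_right_mem_of_le 𝒜 hd hdn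
            rw [heq]
            exact mul_mem (ih (n - d) (Nat.sub_lt hn hdpos) _ (SetLike.coe_mem _))
              (Algebra.subset_adjoin hs)
        · have heq : GradedRing.proj 𝒜 n (c s * s) = 0 := by
            rw [GradedRing.proj_apply]
            exact DirectSum.coe_decompose_mul_of_right_mem_of_not_le 𝒜 hd hdn
          rw [heq]
          exact Subalgebra.zero_mem _
  have htop : Algebra.adjoin ↥A₀ (S : Set A) = ⊤ := by
    rw [eq_top_iff]
    intro x _
    rw [← DirectSum.sum_support_decompose 𝒜 x]
    exact sum_mem fun i _ => key i _ (SetLike.coe_mem _)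
  have hAC : (⊤ : Subalgebra ↥A₀ A).FG := ⟨S, htop⟩
  -- `A` is generated over `B` by `S` as well
  have hBtop : Algebra.adjoin ↥B (S : Set A) = ⊤ := by
    rw [eq_top_iff]
    intro x _
    have hx : x ∈ Algebra.adjoin ↥A₀ (S : Set A) := htop ▸ Algebra.mem_top
    refine Algebra.adjoin_induction (fun s hs => Algebra.subset_adjoin hs)
      (fun r => ?_) (fun a b _ _ ha hb => add_mem ha hb)
      (fun a b _ _ ha hb => mul_mem ha hb) hx
    exact Subalgebra.algebraMap_mem (Algebra.adjoin ↥B (S : Set A)) (⟨(r : A), hA₀B r.2⟩ : ↥B)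
  -- every element of `S` is integral over `B`
  have hintS : ∀ s ∈ (S : Set A), IsIntegral ↥B s := by
    intro s hs
    obtain ⟨d, hd⟩ := hS_homog s hs
    have hpow : s ^ h ∈ 𝒜 (h * d) := by
      have := SetLike.pow_mem_graded h hd
      simpa [smul_eq_mul] using this
    have hpowB : s ^ h ∈ B := Algebra.subset_adjoin (Set.mem_iUnion.mpr ⟨d, hpow⟩)
    refine ⟨Polynomial.X ^ h - Polynomial.C (⟨s ^ h, hpowB⟩ : ↥B),
      Polynomial.monic_X_pow_sub_C _ hh.ne', ?_⟩
    simp only [Polynomial.eval₂_sub, Polynomial.eval₂_pow, Polynomial.eval₂_X,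
      Polynomial.eval₂_C]
    exact sub_eq_zero_of_eq rfl
  have hBC : (⊤ : Submodule ↥B A).FG := by
    have hfg := fg_adjoin_of_finite S.finite_toSet hintS
    rwa [hBtop, Algebra.top_toSubmodule] at hfg
  have hfin : Module.Finite ↥B A := ⟨hBC⟩
  -- Artin–Tate
  letI : Algebra ↥A₀ ↥B := (Subalgebra.inclusion hA₀B).toRingHom.toAlgebra
  haveI : IsScalarTower ↥A₀ ↥B A := IsScalarTower.of_algebraMap_eq fun x => rfl
  haveI : IsNoetherianRing ↥A₀ := by
    refine isNoetherianRing_of_surjective A ↥A₀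
      ((GradedRing.projZeroRingHom 𝒜).codRestrict A₀.toSubring fun x => ?_) (fun y => ?_)
    · exact SetLike.coe_mem (DirectSum.decompose 𝒜 x 0)
    · refine ⟨(y : A), Subtype.ext ?_⟩
      exact DirectSum.decompose_of_mem_same 𝒜 y.2
  have hABfg : (⊤ : Subalgebra ↥A₀ ↥B).FG :=
    fg_of_fg_of_fg ↥A₀ ↥B A hAC hBC (fun x y hxy => Subtype.ext hxy)
  haveI : IsNoetherianRing ↥(⊤ : Subalgebra ↥A₀ ↥B) := isNoetherianRing_of_fg hABfg
  have e : (⊤ : Subalgebra ↥A₀ ↥B) ≃ₐ[↥A₀] ↥B := Subalgebra.topEquiv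
  have hnoeth : IsNoetherianRing ↥B := isNoetherianRing_of_ringEquiv _ e.toRingEquiv
  exact ⟨hnoeth, hfin⟩
end

section
/- With the metrized line bundle 𝒪(d) on ℙ¹_ℤ given by |s|_d(x:y) = |s(x,y)|/(max{α|x|, β|y|})^d where β, γ ∈ (0,1) and α = β^{1-1/γ}, any section s = Σ_{i=0}^d aᵢ X^i Y^{d-i} ∈ ℂ[X,Y]_d satisfies ‖s‖_sup ≥ √(Σ_{i=0}^d (|aᵢ|/(α^i β^{d-i}))²). -/
open scoped BigOperators

open Complex Finset

local notation "conj'" => starRingEnd ℂ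

lemma aux_abs_one (N : ℕ) (hN : N ≠ 0) (ζ : ℂ) (hζ : IsPrimitiveRoot ζ N) :
    ‖ζ‖ = 1 := by
  have h1 : (‖ζ‖) ^ N = 1 := by
    rw [← norm_pow, hζ.pow_eq_one, norm_one]
  have h0 : 0 ≤ ‖ζ‖ := norm_nonneg ζ
  rcases lt_trichotomy (‖ζ‖) 1 with h | h | h
  · have := pow_lt_one₀ h0 h hN
    rw [h1] at this; exact absurd this (lt_irrefl 1)
  · exact h
  · have := one_lt_pow₀ h hN
    rw [h1] at this; exact absurd this (lt_irrefl 1)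

lemma aux_orth (N : ℕ) (hN : N ≠ 0) (ζ : ℂ) (hζ : IsPrimitiveRoot ζ N)
    (i j : Fin N) :
    ∑ k : Fin N, ζ ^ ((k : ℕ) * (i : ℕ)) * conj' (ζ ^ ((k : ℕ) * (j : ℕ))) =
      if i = j then (N : ℂ) else 0 := by
  have habs := aux_abs_one N hN ζ hζ
  have hterm : ∀ k : Fin N, ζ ^ ((k : ℕ) * (i : ℕ)) * conj' (ζ ^ ((k : ℕ) * (j : ℕ)))
      = (ζ ^ (i : ℕ) * conj' (ζ ^ (j : ℕ))) ^ (k : ℕ) := by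
    intro k
    rw [mul_pow, mul_comm (k : ℕ) (i : ℕ), pow_mul, mul_comm (k : ℕ) (j : ℕ), pow_mul,
      ← map_pow]
  have hconjmul : conj' (ζ ^ (j : ℕ)) * ζ ^ (j : ℕ) = 1 := by
    rw [mul_comm, Complex.mul_conj]
    norm_cast
    rw [Complex.normSq_eq_norm_sq, norm_pow, habs, one_pow, one_pow]
  simp only [hterm]
  by_cases hij : i = j
  · subst hij
    have h1 : ζ ^ (i : ℕ) * conj' (ζ ^ (i : ℕ)) = 1 := by rw [mul_comm]; exact hconjmul
    rw [if_pos rfl]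
    have h2 : ∀ k : Fin N, (ζ ^ (i : ℕ) * conj' (ζ ^ (i : ℕ))) ^ (k : ℕ) = 1 := fun k => by
      rw [h1, one_pow]
    rw [Finset.sum_congr rfl fun k _ => h2 k, Finset.sum_const, Finset.card_univ,
      Fintype.card_fin, nsmul_eq_mul, mul_one]
  · have hw1 : ζ ^ (i : ℕ) * conj' (ζ ^ (j : ℕ)) ≠ 1 := by
      intro h
      have : ζ ^ (i : ℕ) = ζ ^ (j : ℕ) := by
        calc ζ ^ (i : ℕ) = ζ ^ (i : ℕ) * (conj' (ζ ^ (j : ℕ)) * ζ ^ (j : ℕ)) := by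
              rw [hconjmul, mul_one]
          _ = (ζ ^ (i : ℕ) * conj' (ζ ^ (j : ℕ))) * ζ ^ (j : ℕ) := by ring
          _ = ζ ^ (j : ℕ) := by rw [h, one_mul]
      exact hij (Fin.ext (hζ.pow_inj i.isLt j.isLt this))
    have hwN : (ζ ^ (i : ℕ) * conj' (ζ ^ (j : ℕ))) ^ N = 1 := by
      rw [mul_pow, ← pow_mul, mul_comm (i : ℕ) N, pow_mul, hζ.pow_eq_one, one_pow,
        ← map_pow, ← pow_mul, mul_comm (j : ℕ) N, pow_mul, hζ.pow_eq_one, one_pow, map_one,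
        one_mul]
    rw [if_neg hij, Fin.sum_univ_eq_sum_range (fun k => (ζ ^ (i:ℕ) * conj' (ζ ^ (j:ℕ))) ^ k),
      geom_sum_eq hw1, hwN, sub_self, zero_div]

lemma dft_exists (N : ℕ) (hN : N ≠ 0) (ζ : ℂ) (hζ : IsPrimitiveRoot ζ N)
    (c : Fin N → ℂ) :
    ∃ k : Fin N, ∑ i : Fin N, (‖c i‖) ^ 2 ≤
      (‖∑ i : Fin N, c i * ζ ^ ((k : ℕ) * (i : ℕ))‖) ^ 2 := by
  set S : Fin N → ℂ := fun k => ∑ i : Fin N, c i * ζ ^ ((k : ℕ) * (i : ℕ)) with hS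
  have habs2 : ∀ z : ℂ, ((‖z‖ : ℂ)) ^ 2 = z * conj' z := by
    intro z
    rw [Complex.mul_conj, ← Complex.sq_norm]
    push_cast
    ring
  have key : ∑ k : Fin N, (‖S k‖) ^ 2
      = N * ∑ i : Fin N, (‖c i‖) ^ 2 := by
    have hc : ((∑ k : Fin N, (‖S k‖) ^ 2 : ℝ) : ℂ)
        = ((N * ∑ i : Fin N, (‖c i‖) ^ 2 : ℝ) : ℂ) := by
      push_cast
      calc ∑ k : Fin N, ((‖S k‖ : ℂ)) ^ 2
          = ∑ k : Fin N, S k * conj' (S k) := by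
            exact Finset.sum_congr rfl fun k _ => habs2 (S k)
        _ = ∑ k : Fin N, ∑ i : Fin N, ∑ j : Fin N,
              (c i * conj' (c j)) * (ζ ^ ((k:ℕ)*(i:ℕ)) * conj' (ζ ^ ((k:ℕ)*(j:ℕ)))) := by
            refine Finset.sum_congr rfl fun k _ => ?_
            rw [hS]
            simp only [map_sum, map_mul, Finset.sum_mul_sum]
            exact Finset.sum_congr rfl fun i _ => Finset.sum_congr rfl fun j _ => by ring
        _ = ∑ i : Fin N, ∑ j : Fin N,
              (c i * conj' (c j)) * ∑ k : Fin N, (ζ ^ ((k:ℕ)*(i:ℕ)) * conj' (ζ ^ ((k:ℕ)*(j:ℕ)))) := by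
            rw [Finset.sum_comm]
            refine Finset.sum_congr rfl fun i _ => ?_
            rw [Finset.sum_comm]
            exact Finset.sum_congr rfl fun j _ => (Finset.mul_sum _ _ _).symm
        _ = ∑ i : Fin N, ∑ j : Fin N,
              (c i * conj' (c j)) * (if i = j then (N : ℂ) else 0) := by
            refine Finset.sum_congr rfl fun i _ => Finset.sum_congr rfl fun j _ => ?_
            rw [aux_orth N hN ζ hζ i j]
        _ = ∑ i : Fin N, (c i * conj' (c i)) * N := by
            refine Finset.sum_congr rfl fun i _ => ?_
            simp
        _ = (N : ℂ) * ∑ i : Fin N, ((‖c i‖ : ℂ)) ^ 2 := by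
            rw [Finset.mul_sum]
            exact Finset.sum_congr rfl fun i _ => by rw [habs2]; ring
    exact_mod_cast hc
  have hne : (Finset.univ : Finset (Fin N)).Nonempty := by
    have : 0 < N := Nat.pos_of_ne_zero hN
    exact ⟨⟨0, this⟩, Finset.mem_univ _⟩
  have hsum : ∑ _k : Fin N, (∑ i : Fin N, (‖c i‖) ^ 2)
      ≤ ∑ k : Fin N, (‖S k‖) ^ 2 := by
    rw [key, Finset.sum_const, Finset.card_univ, Fintype.card_fin, nsmul_eq_mul]
  obtain ⟨k, _, hk⟩ := Finset.exists_le_of_sum_le hne hsum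
  exact ⟨k, hk⟩

/-- On `ℙ¹_ℤ` with `𝒪(d)` metrized by
`|s|_d(x:y) = |s(x,y)| / max(α|x|, β|y|)^d`, `β, γ ∈ (0,1)`, `α = β^{1-1/γ}`, every
section `s = ∑ aᵢ X^i Y^{d-i}` with complex coefficients satisfies
`‖s‖_sup ≥ √(∑ (|aᵢ|/(α^i β^{d-i}))²)`. -/
theorem supNorm_ge_l2_bound (β γ : ℝ) (hβ : β ∈ Set.Ioo (0 : ℝ) 1)
    (hγ : γ ∈ Set.Ioo (0 : ℝ) 1) (α : ℝ) (hα : α = β ^ (1 - 1 / γ))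
    (d : ℕ) (a : Fin (d + 1) → ℂ) :
    Real.sqrt (∑ i : Fin (d + 1),
        (‖a i‖ / (α ^ (i : ℕ) * β ^ (d - (i : ℕ)))) ^ 2)
      ≤ sSup {t : ℝ | ∃ x y : ℂ, (x, y) ≠ 0 ∧
          t = ‖∑ i : Fin (d + 1), a i * x ^ (i : ℕ) * y ^ (d - (i : ℕ))‖
                / (max (α * ‖x‖) (β * ‖y‖)) ^ d} := by
  obtain ⟨hβ0, hβ1⟩ := hβ
  have hα0 : 0 < α := hα ▸ Real.rpow_pos_of_pos hβ0 _
  have hN : d + 1 ≠ 0 := Nat.succ_ne_zero d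
  set ζ : ℂ := Complex.exp (2 * Real.pi * Complex.I / ((d + 1 : ℕ) : ℂ)) with hζdef
  have hζ : IsPrimitiveRoot ζ (d + 1) := Complex.isPrimitiveRoot_exp (d + 1) hN
  have hζabs : ‖ζ‖ = 1 := aux_abs_one (d + 1) hN ζ hζ
  set r : ℝ := β / α with hr
  have hr0 : 0 < r := div_pos hβ0 hα0
  set c : Fin (d + 1) → ℂ := fun i => a i * (r : ℂ) ^ (i : ℕ) with hc
  obtain ⟨k, hk⟩ := dft_exists (d + 1) hN ζ hζ c
  set x₀ : ℂ := (r : ℂ) * ζ ^ (k : ℕ) with hx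
  have hβd : 0 < β ^ d := pow_pos hβ0 d
  have hid : ∀ i : Fin (d + 1), (i : ℕ) + (d - (i : ℕ)) = d := fun i =>
    Nat.add_sub_cancel' (Nat.lt_succ_iff.mp i.isLt)
  set S := {t : ℝ | ∃ x y : ℂ, (x, y) ≠ 0 ∧
          t = ‖∑ i : Fin (d + 1), a i * x ^ (i : ℕ) * y ^ (d - (i : ℕ))‖
                / (max (α * ‖x‖) (β * ‖y‖)) ^ d} with hSdef
  -- the evaluation point
  have hxabs : ‖x₀‖ = r := by
    rw [hx, norm_mul, norm_pow, hζabs, one_pow, mul_one, Complex.norm_real, Real.norm_eq_abs, abs_of_pos hr0]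
  have hden : max (α * ‖x₀‖) (β * ‖(1 : ℂ)‖) = β := by
    rw [hxabs, norm_one, mul_one, hr, mul_div_cancel₀ _ (ne_of_gt hα0), max_self]
  have hnum : ∑ i : Fin (d + 1), a i * x₀ ^ (i : ℕ) * (1 : ℂ) ^ (d - (i : ℕ))
      = ∑ i : Fin (d + 1), c i * ζ ^ ((k : ℕ) * (i : ℕ)) := by
    refine Finset.sum_congr rfl fun i _ => ?_
    simp only [hc, hx, one_pow, mul_one, mul_pow, ← pow_mul]
    ring_nf
  have habsci : ∀ i : Fin (d + 1), ‖c i‖ = ‖a i‖ * r ^ (i : ℕ) := by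
    intro i
    simp only [hc]
    rw [norm_mul, norm_pow, Complex.norm_real, Real.norm_eq_abs, abs_of_pos hr0]
  -- membership
  have hmem : ‖∑ i : Fin (d + 1), c i * ζ ^ ((k : ℕ) * (i : ℕ))‖ / β ^ d ∈ S := by
    refine ⟨x₀, 1, ?_, ?_⟩
    · simp [Prod.ext_iff]
    · rw [hden, hnum]
  -- bounded above
  have hbdd : BddAbove S := by
    refine ⟨∑ i : Fin (d + 1), ‖a i‖ / (α ^ (i : ℕ) * β ^ (d - (i : ℕ))), ?_⟩
    rintro t ⟨u, v, huv, rfl⟩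
    rw [Ne, Prod.mk_eq_zero, not_and_or] at huv
    set M := max (α * ‖u‖) (β * ‖v‖) with hM
    have hM0 : 0 < M := by
      rcases huv with hu | hv
      · exact lt_of_lt_of_le (mul_pos hα0 (norm_pos_iff.mpr hu)) (le_max_left _ _)
      · exact lt_of_lt_of_le (mul_pos hβ0 (norm_pos_iff.mpr hv)) (le_max_right _ _)
    have hu_le : ‖u‖ ≤ M / α := by
      rw [le_div_iff₀ hα0]
      calc ‖u‖ * α = α * ‖u‖ := by ring
        _ ≤ M := le_max_left _ _
    have hv_le : ‖v‖ ≤ M / β := by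
      rw [le_div_iff₀ hβ0]
      calc ‖v‖ * β = β * ‖v‖ := by ring
        _ ≤ M := le_max_right _ _
    have hnum_le : ‖∑ i : Fin (d + 1), a i * u ^ (i : ℕ) * v ^ (d - (i : ℕ))‖
        ≤ ∑ i : Fin (d + 1), ‖a i‖ * ((M / α) ^ (i : ℕ) * (M / β) ^ (d - (i : ℕ))) := by
      refine le_trans (norm_sum_le _ _) (Finset.sum_le_sum fun i _ => ?_)
      rw [norm_mul, norm_mul, norm_pow, norm_pow, mul_assoc]
      refine mul_le_mul_of_nonneg_left ?_ (norm_nonneg _)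
      exact mul_le_mul (pow_le_pow_left₀ (norm_nonneg _) hu_le _)
        (pow_le_pow_left₀ (norm_nonneg _) hv_le _) (by positivity) (by positivity)
    have hterm : ∀ i : Fin (d + 1), (M / α) ^ (i : ℕ) * (M / β) ^ (d - (i : ℕ))
        = M ^ d / (α ^ (i : ℕ) * β ^ (d - (i : ℕ))) := by
      intro i
      rw [div_pow, div_pow, div_mul_div_comm, ← pow_add, hid i]
    rw [div_le_iff₀ (pow_pos hM0 d)]
    refine le_trans hnum_le ?_
    rw [Finset.sum_mul]
    refine le_of_eq (Finset.sum_congr rfl fun i _ => ?_)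
    rw [hterm i]
    have h1 : α ^ (i : ℕ) * β ^ (d - (i : ℕ)) ≠ 0 := by positivity
    field_simp
  -- lower bound for the chosen point
  have hkey : ∀ i : Fin (d + 1), ‖a i‖ / (α ^ (i : ℕ) * β ^ (d - (i : ℕ)))
      = ‖c i‖ / β ^ d := by
    intro i
    have hb : β ^ d = β ^ (i : ℕ) * β ^ (d - (i : ℕ)) := by rw [← pow_add, hid i]
    rw [habsci i, hr, div_pow, hb]
    have hαi : α ^ (i : ℕ) ≠ 0 := by positivity
    have hβi : β ^ (i : ℕ) ≠ 0 := by positivity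
    have hβdi : β ^ (d - (i : ℕ)) ≠ 0 := by positivity
    field_simp
  have hLHS : ∑ i : Fin (d + 1), (‖a i‖ / (α ^ (i : ℕ) * β ^ (d - (i : ℕ)))) ^ 2
      = (∑ i : Fin (d + 1), ‖c i‖ ^ 2) / (β ^ d) ^ 2 := by
    rw [Finset.sum_div]
    exact Finset.sum_congr rfl fun i _ => by rw [hkey i, div_pow]
  calc Real.sqrt (∑ i : Fin (d + 1),
          (‖a i‖ / (α ^ (i : ℕ) * β ^ (d - (i : ℕ)))) ^ 2)
      = Real.sqrt (∑ i : Fin (d + 1), ‖c i‖ ^ 2) / β ^ d := by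
        rw [hLHS, Real.sqrt_div (Finset.sum_nonneg fun i _ => sq_nonneg _) ((β ^ d) ^ 2),
          Real.sqrt_sq hβd.le]
    _ ≤ ‖∑ i : Fin (d + 1), c i * ζ ^ ((k : ℕ) * (i : ℕ))‖ / β ^ d := by
        refine (div_le_div_iff_of_pos_right hβd).2 ?_
        calc Real.sqrt (∑ i : Fin (d + 1), ‖c i‖ ^ 2)
            ≤ Real.sqrt ((‖∑ i : Fin (d + 1), c i * ζ ^ ((k : ℕ) * (i : ℕ))‖) ^ 2) :=
              Real.sqrt_le_sqrt hk
          _ = _ := Real.sqrt_sq (norm_nonneg _)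
    _ ≤ sSup S := le_csSup hbdd hmem
end

section
/- With the metric on 𝒪(d) over ℙ¹_ℤ given by |s|_d(x:y) = |s(x,y)|/(max{α|x|, β|y|})^d, β,γ ∈ (0,1), α = β^{1-1/γ}, the ℤ-span of the strictly small sections {s ∈ H⁰(ℙ¹_ℤ, 𝒪(d)) : ‖s‖_sup < 1} equals ⊕_{dγ < i ≤ d} ℤ·X^i Y^{d-i}, and the ℤ-span of {s : ‖s‖_sup ≤ 1} equals ⊕_{dγ ≤ i ≤ d} ℤ·X^i Y^{d-i}. -/
/-- The supremum norm of the integral section `∑ aᵢ X^i Y^{d-i}` of `𝒪(d)` on `ℙ¹` for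
the metric `|s|_d(x:y) = |s(x,y)| / max(α|x|, β|y|)^d`. -/
noncomputable def supNormO (α β : ℝ) (d : ℕ) (a : Fin (d + 1) → ℤ) : ℝ :=
  sSup {t : ℝ | ∃ x y : ℂ, (x, y) ≠ 0 ∧
    t = ‖∑ i : Fin (d + 1), (a i : ℂ) * x ^ (i : ℕ) * y ^ (d - (i : ℕ))‖
          / (max (α * ‖x‖) (β * ‖y‖)) ^ d}

lemma pointwise_bound (α β : ℝ) (hα : 0 < α) (hβ : 0 < β) (d : ℕ) (a : Fin (d + 1) → ℤ)
    (x y : ℂ) (h : (x, y) ≠ 0) :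
    ‖(∑ i : Fin (d + 1), (a i : ℂ) * x ^ (i : ℕ) * y ^ (d - (i : ℕ)))‖
      / (max (α * ‖x‖) (β * ‖y‖)) ^ d
    ≤ ∑ i : Fin (d + 1), |(a i : ℝ)| * α⁻¹ ^ (i : ℕ) * β⁻¹ ^ (d - (i : ℕ)) := by
  set M := max (α * ‖x‖) (β * ‖y‖) with hM
  have hxy : x ≠ 0 ∨ y ≠ 0 := by
    by_contra hc
    push_neg at hc
    exact h (by simp [hc.1, hc.2, Prod.ext_iff])
  have hMpos : 0 < M := by
    rcases hxy with hx | hy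
    · exact lt_max_of_lt_left (mul_pos hα (norm_pos_iff.mpr hx))
    · exact lt_max_of_lt_right (mul_pos hβ (norm_pos_iff.mpr hy))
  have hx' : ‖x‖ ≤ α⁻¹ * M := by
    rw [le_inv_mul_iff₀ hα]; exact le_max_left _ _
  have hy' : ‖y‖ ≤ β⁻¹ * M := by
    rw [le_inv_mul_iff₀ hβ]; exact le_max_right _ _
  rw [div_le_iff₀ (by positivity)]
  calc ‖(∑ i : Fin (d + 1), (a i : ℂ) * x ^ (i : ℕ) * y ^ (d - (i : ℕ)))‖
      ≤ ∑ i : Fin (d + 1), |(a i : ℝ)| * ‖x‖ ^ (i : ℕ) * ‖y‖ ^ (d - (i : ℕ)) := by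
        refine le_trans (norm_sum_le _ _) (Finset.sum_le_sum fun i _ => ?_)
        simp [norm_mul, norm_pow, Complex.norm_intCast]
    _ ≤ ∑ i : Fin (d + 1), (|(a i : ℝ)| * α⁻¹ ^ (i : ℕ) * β⁻¹ ^ (d - (i : ℕ))) * M ^ d := by
        refine Finset.sum_le_sum fun i _ => ?_
        have hi : (i : ℕ) + (d - (i : ℕ)) = d := Nat.add_sub_cancel' (Nat.lt_succ_iff.mp i.isLt)
        calc |(a i : ℝ)| * ‖x‖ ^ (i : ℕ) * ‖y‖ ^ (d - (i : ℕ))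
            ≤ |(a i : ℝ)| * (α⁻¹ * M) ^ (i : ℕ) * (β⁻¹ * M) ^ (d - (i : ℕ)) := by
              gcongr <;> positivity
          _ = (|(a i : ℝ)| * α⁻¹ ^ (i : ℕ) * β⁻¹ ^ (d - (i : ℕ))) * M ^ d := by
              rw [mul_pow, mul_pow]; rw [show M ^ d = M ^ ((i : ℕ) + (d - (i : ℕ))) from by rw [hi], pow_add]; ring
    _ = _ := by rw [← Finset.sum_mul]

lemma bddAbove_set (α β : ℝ) (hα : 0 < α) (hβ : 0 < β) (d : ℕ) (a : Fin (d + 1) → ℤ) :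
    BddAbove {t : ℝ | ∃ x y : ℂ, (x, y) ≠ 0 ∧
      t = ‖(∑ i : Fin (d + 1), (a i : ℂ) * x ^ (i : ℕ) * y ^ (d - (i : ℕ)))‖
            / (max (α * ‖x‖) (β * ‖y‖)) ^ d} := by
  refine ⟨∑ i : Fin (d + 1), |(a i : ℝ)| * α⁻¹ ^ (i : ℕ) * β⁻¹ ^ (d - (i : ℕ)), ?_⟩
  rintro t ⟨x, y, hxy, rfl⟩
  exact pointwise_bound α β hα hβ d a x y hxy

lemma supNormO_le (α β : ℝ) (hα : 0 < α) (hβ : 0 < β) (d : ℕ) (a : Fin (d + 1) → ℤ) :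
    supNormO α β d a ≤ ∑ i : Fin (d + 1), |(a i : ℝ)| * α⁻¹ ^ (i : ℕ) * β⁻¹ ^ (d - (i : ℕ)) := by
  refine Real.sSup_le ?_ (by positivity)
  rintro t ⟨x, y, hxy, rfl⟩
  exact pointwise_bound α β hα hβ d a x y hxy

lemma supNormO_single_le (α β : ℝ) (hα : 0 < α) (hβ : 0 < β) (d : ℕ) (i : Fin (d + 1)) :
    supNormO α β d (Pi.single i 1) ≤ α⁻¹ ^ (i : ℕ) * β⁻¹ ^ (d - (i : ℕ)) := by
  refine (supNormO_le α β hα hβ d _).trans_eq ?_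
  rw [Fintype.sum_eq_single i fun j hj => by simp [Pi.single_eq_of_ne hj]]
  simp

lemma supNormO_lower (α β : ℝ) (hα : 0 < α) (hβ : 0 < β) (d : ℕ) (a : Fin (d + 1) → ℤ)
    (j : Fin (d + 1)) :
    |(a j : ℝ)| * α⁻¹ ^ (j : ℕ) * β⁻¹ ^ (d - (j : ℕ)) ≤ supNormO α β d a := by
  set ζ : ℂ := Complex.exp (2 * Real.pi * Complex.I / ((d + 1 : ℕ) : ℂ)) with hζ
  have hprim : IsPrimitiveRoot ζ (d + 1) := Complex.isPrimitiveRoot_exp (d + 1) (by omega)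
  have hζN : ζ ^ (d + 1) = 1 := hprim.pow_eq_one
  have hζ0 : ζ ≠ 0 := hζ ▸ Complex.exp_ne_zero _
  have habs : ‖ζ‖ = 1 := by
    rw [hζ, Complex.norm_exp]
    norm_num [Complex.div_re, Complex.mul_re, Complex.mul_im]
  -- each sample value is ≤ supNormO
  have hsample : ∀ k : ℕ,
      ‖(∑ i : Fin (d + 1), (a i : ℂ) * ((α⁻¹ : ℝ) * ζ ^ k) ^ (i : ℕ) * ((β⁻¹ : ℝ) : ℂ) ^ (d - (i : ℕ)))‖
        ≤ supNormO α β d a := by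
    intro k
    have hmem : ‖(∑ i : Fin (d + 1), (a i : ℂ) * ((α⁻¹ : ℝ) * ζ ^ k) ^ (i : ℕ) * ((β⁻¹ : ℝ) : ℂ) ^ (d - (i : ℕ)))‖
        / (max (α * ‖((α⁻¹ : ℝ) * ζ ^ k)‖) (β * ‖((β⁻¹ : ℝ) : ℂ)‖)) ^ d
        ∈ {t : ℝ | ∃ x y : ℂ, (x, y) ≠ 0 ∧
          t = ‖(∑ i : Fin (d + 1), (a i : ℂ) * x ^ (i : ℕ) * y ^ (d - (i : ℕ)))‖
                / (max (α * ‖x‖) (β * ‖y‖)) ^ d} := by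
      refine ⟨(α⁻¹ : ℝ) * ζ ^ k, ((β⁻¹ : ℝ) : ℂ), ?_, rfl⟩
      simp only [Prod.ext_iff, ne_eq, not_and_or]
      right
      intro hc
      simp only [Prod.snd_zero, Complex.ofReal_eq_zero] at hc
      exact absurd hc (inv_ne_zero hβ.ne')
    have := le_csSup (bddAbove_set α β hα hβ d a) hmem
    have hmax : max (α * ‖((α⁻¹ : ℝ) * ζ ^ k)‖) (β * ‖((β⁻¹ : ℝ) : ℂ)‖) = 1 := by
      rw [norm_mul, norm_pow, habs, Complex.norm_real, Complex.norm_real, Real.norm_eq_abs, Real.norm_eq_abs,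
        abs_of_pos (inv_pos.mpr hα), abs_of_pos (inv_pos.mpr hβ), one_pow, mul_one,
        mul_inv_cancel₀ hα.ne', mul_inv_cancel₀ hβ.ne', max_self]
    rwa [hmax, one_pow, div_one] at this
  -- orthogonality of roots of unity
  have horth : ∀ i : Fin (d + 1), ∑ k ∈ Finset.range (d + 1), ((ζ ^ (j : ℕ))⁻¹ * ζ ^ (i : ℕ)) ^ k
      = if i = j then ((d + 1 : ℕ) : ℂ) else 0 := by
    intro i
    by_cases hij : i = j
    · subst hij
      rw [inv_mul_cancel₀ (pow_ne_zero _ hζ0)]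
      simp
    · rw [if_neg hij]
      set ω : ℂ := (ζ ^ (j : ℕ))⁻¹ * ζ ^ (i : ℕ) with hω
      have hωN : ω ^ (d + 1) = 1 := by
        rw [hω, mul_pow, inv_pow, ← pow_mul, ← pow_mul, mul_comm (j : ℕ) (d + 1),
          mul_comm (i : ℕ) (d + 1), pow_mul, pow_mul, hζN, one_pow, one_pow, inv_one, one_mul]
      have hω1 : ω ≠ 1 := by
        intro hc
        rw [hω, inv_mul_eq_one₀ (pow_ne_zero _ hζ0)] at hc
        exact hij (Fin.ext (hprim.pow_inj i.isLt j.isLt hc.symm))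
      have := geom_sum_mul ω (d + 1)
      rw [hωN, sub_self] at this
      rcases mul_eq_zero.mp this with h0 | h0
      · exact h0
      · exact absurd (sub_eq_zero.mp h0) hω1
  have step1 : ∀ (k : ℕ) (i : Fin (d + 1)),
      ((ζ ^ (j : ℕ))⁻¹) ^ k * ((a i : ℂ) * (((α⁻¹ : ℝ) : ℂ) * ζ ^ k) ^ (i : ℕ) * ((β⁻¹ : ℝ) : ℂ) ^ (d - (i : ℕ)))
      = ((a i : ℂ) * ((α⁻¹ : ℝ) : ℂ) ^ (i : ℕ) * ((β⁻¹ : ℝ) : ℂ) ^ (d - (i : ℕ)))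
          * ((ζ ^ (j : ℕ))⁻¹ * ζ ^ (i : ℕ)) ^ k := by
    intro k i
    rw [mul_pow (((α⁻¹ : ℝ)) : ℂ) (ζ ^ k), ← pow_mul, mul_comm k (i : ℕ), pow_mul,
      mul_pow ((ζ ^ (j : ℕ))⁻¹) (ζ ^ (i : ℕ))]
    ring
  have hkey : ∑ k ∈ Finset.range (d + 1), ((ζ ^ (j : ℕ))⁻¹) ^ k *
      (∑ i : Fin (d + 1), (a i : ℂ) * (((α⁻¹ : ℝ) : ℂ) * ζ ^ k) ^ (i : ℕ) * ((β⁻¹ : ℝ) : ℂ) ^ (d - (i : ℕ)))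
      = ((d + 1 : ℕ) : ℂ) * ((a j : ℂ) * ((α⁻¹ : ℝ) : ℂ) ^ (j : ℕ) * ((β⁻¹ : ℝ) : ℂ) ^ (d - (j : ℕ))) := by
    calc ∑ k ∈ Finset.range (d + 1), ((ζ ^ (j : ℕ))⁻¹) ^ k *
        (∑ i : Fin (d + 1), (a i : ℂ) * (((α⁻¹ : ℝ) : ℂ) * ζ ^ k) ^ (i : ℕ) * ((β⁻¹ : ℝ) : ℂ) ^ (d - (i : ℕ)))
        = ∑ k ∈ Finset.range (d + 1), ∑ i : Fin (d + 1),
            ((a i : ℂ) * ((α⁻¹ : ℝ) : ℂ) ^ (i : ℕ) * ((β⁻¹ : ℝ) : ℂ) ^ (d - (i : ℕ)))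
              * ((ζ ^ (j : ℕ))⁻¹ * ζ ^ (i : ℕ)) ^ k := by
          refine Finset.sum_congr rfl fun k _ => ?_
          rw [Finset.mul_sum]
          exact Finset.sum_congr rfl fun i _ => step1 k i
      _ = ∑ i : Fin (d + 1), ∑ k ∈ Finset.range (d + 1),
            ((a i : ℂ) * ((α⁻¹ : ℝ) : ℂ) ^ (i : ℕ) * ((β⁻¹ : ℝ) : ℂ) ^ (d - (i : ℕ)))
              * ((ζ ^ (j : ℕ))⁻¹ * ζ ^ (i : ℕ)) ^ k := Finset.sum_comm
      _ = ∑ i : Fin (d + 1), ((a i : ℂ) * ((α⁻¹ : ℝ) : ℂ) ^ (i : ℕ) * ((β⁻¹ : ℝ) : ℂ) ^ (d - (i : ℕ)))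
              * (if i = j then ((d + 1 : ℕ) : ℂ) else 0) := by
          refine Finset.sum_congr rfl fun i _ => ?_
          rw [← Finset.mul_sum, horth i]
      _ = _ := by
          rw [Fintype.sum_eq_single j fun i hi => by rw [if_neg hi, mul_zero]]
          rw [if_pos rfl]; ring
  -- take absolute values
  have habs_le : ‖(∑ k ∈ Finset.range (d + 1), ((ζ ^ (j : ℕ))⁻¹) ^ k *
      (∑ i : Fin (d + 1), (a i : ℂ) * (((α⁻¹ : ℝ) : ℂ) * ζ ^ k) ^ (i : ℕ) * ((β⁻¹ : ℝ) : ℂ) ^ (d - (i : ℕ))))‖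
      ≤ ((d + 1 : ℕ) : ℝ) * supNormO α β d a := by
    refine (norm_sum_le _ _).trans ?_
    have : ∀ k ∈ Finset.range (d + 1), ‖(((ζ ^ (j : ℕ))⁻¹) ^ k *
        (∑ i : Fin (d + 1), (a i : ℂ) * (((α⁻¹ : ℝ) : ℂ) * ζ ^ k) ^ (i : ℕ) * ((β⁻¹ : ℝ) : ℂ) ^ (d - (i : ℕ))))‖
        ≤ supNormO α β d a := by
      intro k _
      rw [norm_mul, norm_pow, norm_inv, norm_pow, habs, one_pow, inv_one, one_pow, one_mul]
      exact hsample k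
    refine (Finset.sum_le_sum this).trans ?_
    rw [Finset.sum_const, Finset.card_range, nsmul_eq_mul]
  rw [hkey] at habs_le
  have hres : ((d + 1 : ℕ) : ℝ) * (|(a j : ℝ)| * α⁻¹ ^ (j : ℕ) * β⁻¹ ^ (d - (j : ℕ)))
      ≤ ((d + 1 : ℕ) : ℝ) * supNormO α β d a := by
    refine le_trans (le_of_eq ?_) habs_le
    rw [norm_mul, norm_mul, norm_mul, norm_pow, norm_pow, Complex.norm_natCast,
      Complex.norm_intCast, Complex.norm_real, Complex.norm_real, Real.norm_eq_abs, Real.norm_eq_abs,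
      abs_of_pos (inv_pos.mpr hα), abs_of_pos (inv_pos.mpr hβ)]
  have hNpos : (0 : ℝ) < ((d + 1 : ℕ) : ℝ) := by positivity
  calc |(a j : ℝ)| * α⁻¹ ^ (j : ℕ) * β⁻¹ ^ (d - (j : ℕ))
      ≤ supNormO α β d a := le_of_mul_le_mul_left (by linarith [hres]) hNpos

lemma c_eq (β γ : ℝ) (hβ0 : 0 < β) (α : ℝ) (hα : α = β ^ (1 - 1 / γ)) (d : ℕ)
    (i : Fin (d + 1)) :
    α⁻¹ ^ (i : ℕ) * β⁻¹ ^ (d - (i : ℕ)) = β ^ ((i : ℕ) / γ - d) := by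
  have hile : (i : ℕ) ≤ d := Nat.lt_succ_iff.mp i.isLt
  have hid : ((d - (i : ℕ) : ℕ) : ℝ) = (d : ℝ) - ((i : ℕ) : ℝ) := by
    push_cast [Nat.cast_sub hile]; ring
  have h1 : α⁻¹ ^ (i : ℕ) = β ^ (-(1 - 1 / γ) * ((i : ℕ) : ℝ)) := by
    rw [hα, ← Real.rpow_neg hβ0.le, Real.rpow_mul hβ0.le, Real.rpow_natCast]
  have h2 : β⁻¹ ^ (d - (i : ℕ)) = β ^ ((-1 : ℝ) * ((d - (i : ℕ) : ℕ) : ℝ)) := by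
    rw [← Real.rpow_neg_one β, Real.rpow_mul hβ0.le, Real.rpow_natCast]
  rw [h1, h2, ← Real.rpow_add hβ0, hid]
  congr 1
  ring

lemma decomp_mem_span (d : ℕ) (a : Fin (d + 1) → ℤ) (P : Fin (d + 1) → Prop)
    (h : ∀ j, ¬ P j → a j = 0) :
    a ∈ Submodule.span ℤ {b : Fin (d + 1) → ℤ | ∃ i, P i ∧ b = Pi.single i 1} := by
  have ha : a = ∑ i : Fin (d + 1), a i • Pi.single i 1 := by
    ext j
    simp [Finset.sum_apply, Pi.single_apply]
  rw [ha]
  refine Submodule.sum_mem _ fun i _ => ?_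
  by_cases hi : P i
  · exact Submodule.smul_mem _ _ (Submodule.subset_span ⟨i, hi, rfl⟩)
  · rw [h i hi, zero_smul]; exact Submodule.zero_mem _

lemma int_abs_lt_one {n : ℤ} (h : |(n : ℝ)| < 1) : n = 0 := by
  have : |n| < 1 := by exact_mod_cast h
  rw [abs_lt] at this
  omega

/-- On `ℙ¹_ℤ` with `𝒪(d)` metrized by
`|s|_d(x:y) = |s(x,y)| / max(α|x|, β|y|)^d`, `β, γ ∈ (0,1)`, `α = β^{1-1/γ}`
(identifying `H⁰(ℙ¹_ℤ, 𝒪(d))` with coefficient vectors `a : Fin (d+1) → ℤ`), the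
`ℤ`-span of the strictly small sections is `⊕_{dγ < i ≤ d} ℤ·X^iY^{d-i}`, and the
`ℤ`-span of the sections of norm `≤ 1` is `⊕_{dγ ≤ i ≤ d} ℤ·X^iY^{d-i}`. -/
theorem span_strictly_small_sections (β γ : ℝ) (hβ : β ∈ Set.Ioo (0 : ℝ) 1)
    (hγ : γ ∈ Set.Ioo (0 : ℝ) 1) (α : ℝ) (hα : α = β ^ (1 - 1 / γ)) (d : ℕ) :
    Submodule.span ℤ {a : Fin (d + 1) → ℤ | supNormO α β d a < 1}
        = Submodule.span ℤ
            {a : Fin (d + 1) → ℤ | ∃ i : Fin (d + 1),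
              (d : ℝ) * γ < (i : ℕ) ∧ a = Pi.single i 1} ∧
      Submodule.span ℤ {a : Fin (d + 1) → ℤ | supNormO α β d a ≤ 1}
        = Submodule.span ℤ
            {a : Fin (d + 1) → ℤ | ∃ i : Fin (d + 1),
              (d : ℝ) * γ ≤ (i : ℕ) ∧ a = Pi.single i 1} := by
  obtain ⟨hβ0, hβ1⟩ := hβ
  obtain ⟨hγ0, hγ1⟩ := hγ
  have hα0 : 0 < α := hα ▸ Real.rpow_pos_of_pos hβ0 _
  have hc := c_eq β γ hβ0 α hα d
  -- characterization of exponent signs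
  have hlt : ∀ i : Fin (d + 1), (0 : ℝ) < (i : ℕ) / γ - d ↔ (d : ℝ) * γ < (i : ℕ) := by
    intro i
    rw [sub_pos, lt_div_iff₀ hγ0]
  have hle : ∀ i : Fin (d + 1), (0 : ℝ) ≤ (i : ℕ) / γ - d ↔ (d : ℝ) * γ ≤ (i : ℕ) := by
    intro i
    rw [sub_nonneg, le_div_iff₀ hγ0]
  constructor
  · apply le_antisymm
    · rw [Submodule.span_le]
      intro a ha
      refine decomp_mem_span d a (fun i => (d : ℝ) * γ < (i : ℕ)) fun j hj => ?_
      push_neg at hj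
      have h1 : |(a j : ℝ)| * (α⁻¹ ^ (j : ℕ) * β⁻¹ ^ (d - (j : ℕ))) ≤ supNormO α β d a := by
        rw [← mul_assoc]; exact supNormO_lower α β hα0 hβ0 d a j
      have h2 : (1 : ℝ) ≤ β ^ ((j : ℕ) / γ - (d : ℝ)) :=
        Real.one_le_rpow_of_pos_of_le_one_of_nonpos hβ0 hβ1.le
          (by rw [sub_nonpos, div_le_iff₀ hγ0]; exact hj)
      have h3 : |(a j : ℝ)| < 1 := by
        have := (hc j) ▸ h1
        nlinarith [abs_nonneg ((a j : ℝ)), ha.out]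
      exact int_abs_lt_one h3
    · rw [Submodule.span_le]
      rintro b ⟨i, hi, rfl⟩
      refine Submodule.subset_span ?_
      show supNormO α β d (Pi.single i 1) < 1
      refine lt_of_le_of_lt (supNormO_single_le α β hα0 hβ0 d i) ?_
      rw [hc i]
      exact Real.rpow_lt_one hβ0.le hβ1 ((hlt i).mpr hi)
  · apply le_antisymm
    · rw [Submodule.span_le]
      intro a ha
      refine decomp_mem_span d a (fun i => (d : ℝ) * γ ≤ (i : ℕ)) fun j hj => ?_
      have h1 : |(a j : ℝ)| * (α⁻¹ ^ (j : ℕ) * β⁻¹ ^ (d - (j : ℕ))) ≤ supNormO α β d a := by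
        rw [← mul_assoc]; exact supNormO_lower α β hα0 hβ0 d a j
      have h2 : (1 : ℝ) < β ^ ((j : ℕ) / γ - (d : ℝ)) :=
        Real.one_lt_rpow_of_pos_of_lt_one_of_neg hβ0 hβ1
          (by rw [sub_neg, div_lt_iff₀ hγ0]; exact not_le.mp hj)
      have h3 : |(a j : ℝ)| < 1 := by
        have h4 := (hc j) ▸ h1
        nlinarith [abs_nonneg ((a j : ℝ)), ha.out]
      exact int_abs_lt_one h3
    · rw [Submodule.span_le]
      rintro b ⟨i, hi, rfl⟩
      refine Submodule.subset_span ?_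
      show supNormO α β d (Pi.single i 1) ≤ 1
      refine le_trans (supNormO_single_le α β hα0 hβ0 d i) ?_
      rw [hc i]
      exact Real.rpow_le_one hβ0.le hβ1.le ((hle i).mpr hi)
end
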